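/- arXiv:1603.04822 — 2 statements merged into one kernel-verified Lean document; each statement's English description precedes it below -/
import Mathlib

section
/- Let d, t, k be positive integers with t ≤ k ≤ d and β > 0. Write a = ⌊k/t⌋ and b = k − a·t. If H_b ≥ (β/t)·(b(2d+t−1)/2 − b(b−1)/2), then H_b + ((2d − k + (t − b))/2)·a·β ≥ (k/t)·((2d − k + t)/2)·β. -/
/-- Key inequality for the MBMR bound when `t ∤ k`: the entropy accumulation
hypothesis on `H_b` implies the partitioned file-size bound is at least
`(k/t)((2d − k + t)/2)β`. -/
theorem mbmr_entropy_accumulation_ineq (d t k : ℕ) (hd : 0 < d) (ht : 0 < t)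
    (htk : t ≤ k) (hkd : k ≤ d) (a b : ℕ) (ha : a = k / t) (hb : b = k - a * t)
    (β Hb : ℝ) (hβ : 0 < β)
    (hacc : Hb ≥ (β / t) * ((b : ℝ) * (2 * d + t - 1) / 2 - (b : ℝ) * (b - 1) / 2)) :
    Hb + ((2 * (d : ℝ) - k + ((t : ℝ) - b)) / 2) * a * β
      ≥ ((k : ℝ) / t) * ((2 * (d : ℝ) - k + t) / 2) * β := by
  have ht' : (0:ℝ) < t := by exact_mod_cast ht
  have hkn : a * t + b = k := by
    subst ha hb
    have := Nat.div_mul_le_self k t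
    omega
  have hk : (a:ℝ) * t + b = k := by exact_mod_cast hkn
  have key : Hb + ((2 * (d : ℝ) - k + ((t : ℝ) - b)) / 2) * a * β
      - ((k : ℝ) / t) * ((2 * (d : ℝ) - k + t) / 2) * β
      = Hb - (β / t) * ((b : ℝ) * (2 * d + t - 1) / 2 - (b : ℝ) * (b - 1) / 2) := by
    field_simp
    linear_combination (β*(2*(d:ℝ) - k + t - b)) * hk
  linarith [key, hacc]
end

section
/- Let d > z ≥ 1 be integers and M^s > 0. Any reconstruction scheme for an (N, M^s, r, z) secret sharing scheme that contacts d shares and downloads s_1 ≥ s_2 ≥ ⋯ ≥ s_d ≥ 0 symbols from them, where the z largest downloads reveal no information (so ∑_{j=z+1}^{d} s_j ≥ M^s must hold), satisfies total bandwidth ∑_{j=1}^{d} s_j ≥ (d/(d−z))·M^s. -/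
/-- Communication bandwidth lower bound for communication-efficient secret
sharing: downloads `s 1 ≥ ⋯ ≥ s d ≥ 0` with `∑_{j=z+1}^d s j ≥ M^s` satisfy
`∑_{j=1}^d s j ≥ (d/(d−z))·M^s`. -/
theorem secret_sharing_bandwidth_bound (d z : ℕ) (hz : 1 ≤ z) (hzd : z < d)
    (Ms : ℝ) (hMs : 0 < Ms) (s : ℕ → ℝ)
    (hmono : ∀ i j, 1 ≤ i → i ≤ j → j ≤ d → s j ≤ s i)
    (hnonneg : ∀ j, 1 ≤ j → j ≤ d → 0 ≤ s j)
    (htail : Ms ≤ ∑ j ∈ Finset.Icc (z + 1) d, s j) :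
    ∑ j ∈ Finset.Icc 1 d, s j ≥ ((d : ℝ) / ((d : ℝ) - z)) * Ms := by
  have hdz : (0 : ℝ) < (d : ℝ) - z := by
    have : (z : ℝ) < d := by exact_mod_cast hzd
    linarith
  set T : ℝ := ∑ j ∈ Finset.Icc (z + 1) d, s j with hT
  -- T ≤ (d - z) * s (z+1)
  have hcard : (Finset.Icc (z + 1) d).card = d - z := by
    rw [Nat.card_Icc]; omega
  have hTle : T ≤ ((d : ℝ) - z) * s (z + 1) := by
    have h1 : T ≤ ∑ _j ∈ Finset.Icc (z + 1) d, s (z + 1) := by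
      apply Finset.sum_le_sum
      intro j hj
      rw [Finset.mem_Icc] at hj
      exact hmono (z + 1) j (by omega) hj.1 hj.2
    have h2 : ∑ _j ∈ Finset.Icc (z + 1) d, s (z + 1)
        = ((d - z : ℕ) : ℝ) * s (z + 1) := by
      rw [Finset.sum_const, hcard, nsmul_eq_mul]
    have h3 : ((d - z : ℕ) : ℝ) = (d : ℝ) - z := by
      have := Nat.cast_sub (le_of_lt hzd) (R := ℝ)
      simpa using this
    rw [h2, h3] at h1
    exact h1
  have hsz1 : T / ((d : ℝ) - z) ≤ s (z + 1) := by
    rw [div_le_iff₀ hdz]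
    linarith [hTle]
  -- head sum ≥ z * s(z+1)
  have hsplit : ∑ j ∈ Finset.Icc 1 d, s j
      = (∑ j ∈ Finset.Icc 1 z, s j) + T := by
    rw [hT, ← Finset.sum_union]
    · congr 1
      ext x
      simp only [Finset.mem_union, Finset.mem_Icc]
      omega
    · rw [Finset.disjoint_left]
      intro a ha hb
      rw [Finset.mem_Icc] at ha hb
      omega
  have hhead : ((z : ℝ)) * s (z + 1) ≤ ∑ j ∈ Finset.Icc 1 z, s j := by
    have h1 : ∑ _j ∈ Finset.Icc 1 z, s (z + 1) ≤ ∑ j ∈ Finset.Icc 1 z, s j := by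
      apply Finset.sum_le_sum
      intro j hj
      rw [Finset.mem_Icc] at hj
      exact hmono j (z + 1) hj.1 (by omega) (by omega)
    simpa [Nat.card_Icc] using h1
  have hTpos : Ms ≤ T := htail
  have hsz1' : Ms / ((d : ℝ) - z) ≤ s (z + 1) := by
    calc Ms / ((d : ℝ) - z) ≤ T / ((d : ℝ) - z) := by gcongr
      _ ≤ s (z + 1) := hsz1
  have hzR : (0 : ℝ) ≤ z := by positivity
  have key : ((d : ℝ) / ((d : ℝ) - z)) * Ms
      ≤ (z : ℝ) * (Ms / ((d : ℝ) - z)) + Ms := by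
    have : ((d : ℝ) / ((d : ℝ) - z)) * Ms
        = (z : ℝ) * (Ms / ((d : ℝ) - z)) + Ms := by
      field_simp
      ring
    linarith [this.le]
  have : (z : ℝ) * (Ms / ((d : ℝ) - z)) + Ms ≤ ∑ j ∈ Finset.Icc 1 d, s j := by
    rw [hsplit]
    have hz1 : (z : ℝ) * (Ms / ((d : ℝ) - z)) ≤ (z : ℝ) * s (z + 1) :=
      mul_le_mul_of_nonneg_left hsz1' hzR
    linarith [hhead, hTpos]
  linarith
end
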